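/- Let f be a convex function on [a,b] and x_1,...,x_n ∈ [a,b]. Then for any positive weights p_i summing to 1, 0 ≤ f(a) + f(b) − ∑ p_i f(x_i) − f(a + b − ∑ p_i x_i) ≤ 2[f(a) + f(b) − 2 f((a+b)/2)]. -/

import Mathlib

lemma pointwise_mercer {a b : ℝ} (hab : a ≤ b) {f : ℝ → ℝ}
    (hf : ConvexOn ℝ (Set.Icc a b) f) {y : ℝ} (hy : y ∈ Set.Icc a b) :
    f y + f (a + b - y) ≤ f a + f b := by
  rcases eq_or_lt_of_le hab with h | h
  · obtain ⟨h1, h2⟩ := hy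
    have hya : y = a := le_antisymm (h ▸ h2) h1
    rw [hya, ← h]
    have e : a + a - a = a := by ring
    rw [e]
  · obtain ⟨h1, h2⟩ := hy
    have hba : (0:ℝ) < b - a := by linarith
    have hne : b - a ≠ 0 := ne_of_gt hba
    have ht0 : 0 ≤ (b - y) / (b - a) := div_nonneg (by linarith) hba.le
    have hs0 : 0 ≤ (y - a) / (b - a) := div_nonneg (by linarith) hba.le
    have hts : (b - y) / (b - a) + (y - a) / (b - a) = 1 := by field_simp; ring
    have hmema : a ∈ Set.Icc a b := ⟨le_refl a, hab⟩
    have hmemb : b ∈ Set.Icc a b := ⟨hab, le_refl b⟩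
    have i1 := hf.2 hmema hmemb ht0 hs0 hts
    have i2 := hf.2 hmema hmemb hs0 ht0 (by linarith)
    have e1 : ((b - y) / (b - a)) • a + ((y - a) / (b - a)) • b = y := by
      simp only [smul_eq_mul]; field_simp; ring
    have e2 : ((y - a) / (b - a)) • a + ((b - y) / (b - a)) • b = a + b - y := by
      simp only [smul_eq_mul]; field_simp; ring
    rw [e1] at i1; rw [e2] at i2
    simp only [smul_eq_mul] at i1 i2
    have h3 : (b - y) / (b - a) * f a + (y - a) / (b - a) * f b
        + ((y - a) / (b - a) * f a + (b - y) / (b - a) * f b) = f a + f b := by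
      linear_combination (f a + f b) * hts
    linarith

theorem jensen_mercer_with_upper_bound
    (n : ℕ) (a b : ℝ) (hab : a ≤ b)
    (f : ℝ → ℝ) (hf : ConvexOn ℝ (Set.Icc a b) f)
    (p x : Fin n → ℝ)
    (hp : ∀ i, 0 < p i) (hps : ∑ i, p i = 1)
    (hx : ∀ i, x i ∈ Set.Icc a b) :
    0 ≤ f a + f b - ∑ i, p i * f (x i) - f (a + b - ∑ i, p i * x i) ∧
      f a + f b - ∑ i, p i * f (x i) - f (a + b - ∑ i, p i * x i) ≤
        2 * (f a + f b - 2 * f ((a + b) / 2)) := by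
  have hp0 : ∀ i ∈ Finset.univ, (0:ℝ) ≤ p i := fun i _ => (hp i).le
  have hx' : ∀ i ∈ Finset.univ, x i ∈ Set.Icc a b := fun i _ => hx i
  have hy' : ∀ i ∈ Finset.univ, a + b - x i ∈ Set.Icc a b := by
    intro i _
    obtain ⟨h1, h2⟩ := hx i
    exact ⟨by linarith, by linarith⟩
  -- mean is in [a,b]
  have hxb1 : a ≤ ∑ i, p i * x i := by
    calc a = ∑ i, p i * a := by rw [← Finset.sum_mul, hps, one_mul]
    _ ≤ ∑ i, p i * x i :=
        Finset.sum_le_sum fun i _ => mul_le_mul_of_nonneg_left (hx i).1 (hp i).le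
  have hxb2 : (∑ i, p i * x i) ≤ b := by
    calc (∑ i, p i * x i) ≤ ∑ i, p i * b :=
        Finset.sum_le_sum fun i _ => mul_le_mul_of_nonneg_left (hx i).2 (hp i).le
    _ = b := by rw [← Finset.sum_mul, hps, one_mul]
  have hxbar : (∑ i, p i * x i) ∈ Set.Icc a b := ⟨hxb1, hxb2⟩
  have hybar : a + b - ∑ i, p i * x i ∈ Set.Icc a b := ⟨by linarith, by linarith⟩
  -- Jensen for the reflected points gives the left inequality
  have jy := hf.map_sum_le (p := fun i => a + b - x i) hp0 hps hy'
  have hsum : ∑ i, p i • (a + b - x i) = a + b - ∑ i, p i * x i := by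
    simp only [smul_eq_mul, mul_sub]
    rw [Finset.sum_sub_distrib, ← Finset.sum_mul, hps]
    ring
  rw [hsum] at jy
  have jy2 : (∑ i, p i • f (a + b - x i)) ≤ ∑ i, p i * (f a + f b - f (x i)) := by
    apply Finset.sum_le_sum
    intro i _
    have := pointwise_mercer hab hf (hx i)
    simp only [smul_eq_mul]
    exact mul_le_mul_of_nonneg_left (by linarith) (hp i).le
  have hsum2 : (∑ i, p i * (f a + f b - f (x i)))
      = f a + f b - ∑ i, p i * f (x i) := by
    simp only [mul_sub]
    rw [Finset.sum_sub_distrib, ← Finset.sum_mul, hps]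
    ring
  rw [hsum2] at jy2
  have left : f (a + b - ∑ i, p i * x i) ≤ f a + f b - ∑ i, p i * f (x i) :=
    le_trans jy jy2
  -- Jensen for the original points
  have jx := hf.map_sum_le (p := x) hp0 hps hx'
  simp only [smul_eq_mul] at jx
  -- midpoint inequalities
  have hm : ∀ u v : ℝ, u ∈ Set.Icc a b → v ∈ Set.Icc a b →
      f ((u + v) / 2) ≤ (f u + f v) / 2 := by
    intro u v hu hv
    have := hf.2 hu hv (by norm_num : (0:ℝ) ≤ 1/2) (by norm_num : (0:ℝ) ≤ 1/2)
      (by norm_num)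
    simp only [smul_eq_mul] at this
    calc f ((u + v) / 2) = f (1/2 * u + 1/2 * v) := by ring_nf
    _ ≤ 1/2 * f u + 1/2 * f v := this
    _ = (f u + f v) / 2 := by ring
  have mid1 : f ((a + b) / 2) ≤ (f (∑ i, p i * x i) + f (a + b - ∑ i, p i * x i)) / 2 := by
    have := hm _ _ hxbar hybar
    have e : ((∑ i, p i * x i) + (a + b - ∑ i, p i * x i)) / 2 = (a + b) / 2 := by ring
    rwa [e] at this
  have mid2 : f ((a + b) / 2) ≤ (f a + f b) / 2 := hm a b ⟨le_refl a, hab⟩ ⟨hab, le_refl b⟩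
  constructor
  · linarith
  · linarith
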